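/- Let P̃ be the set of all finite products M(a₁,e₀)·M(a₂,e₁)·⋯·M(aₙ,eₙ₋₁), where n ≥ 1, e₀ = 1, each aᵢ is an odd positive integer, each eᵢ ∈ {+1,−1}, aᵢ + eᵢ ≥ 2 for all i, and M(a,e) = [[a, 1],[e, 0]]. Then P̃ = S, where S = { [[a, b],[c, d]] ∈ Γ̃ : a,b,c,d ≥ 0, 0 ≤ d ≤ b, 1 ≤ c ≤ a, a > g·b }. -/

import Mathlib

set_option maxHeartbeats 1000000


noncomputable section

/-- The golden ratio `G = (1+√5)/2`. -/
def Gphi : ℝ := (1 + Real.sqrt 5) / 2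

/-- `g = (√5−1)/2`. -/
def gphi : ℝ := (Real.sqrt 5 - 1) / 2

/-- Entrywise congruence mod 2 of integer 2×2 matrices. -/
def Mod2Eq (σ τ : Matrix (Fin 2) (Fin 2) ℤ) : Prop := ∀ i j, σ i j % 2 = τ i j % 2

/-- `Γ̃ = {σ ∈ GL(2,ℤ) : σ ≡ I, A or B (mod 2)}`. -/
def GammaTilde : Set (Matrix (Fin 2) (Fin 2) ℤ) :=
  {σ | (σ.det = 1 ∨ σ.det = -1) ∧
    (Mod2Eq σ 1 ∨ Mod2Eq σ !![0, 1; 1, 1] ∨ Mod2Eq σ !![1, 1; 1, 0])}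

/-- `S₊₁`. -/
def Splus : Set (Matrix (Fin 2) (Fin 2) ℤ) :=
  {σ | σ ∈ GammaTilde ∧ 0 ≤ σ 0 0 ∧ 0 ≤ σ 0 1 ∧ 0 ≤ σ 1 0 ∧ 0 ≤ σ 1 1 ∧
    σ 1 1 ≤ σ 0 1 ∧ 1 ≤ σ 1 0 ∧ σ 1 0 ≤ σ 0 0 ∧ gphi * (σ 0 1 : ℝ) < (σ 0 0 : ℝ)}

/-- `S₋₁` (matrices of the form `[[a, −b],[c, −d]]`). -/
def Sminus : Set (Matrix (Fin 2) (Fin 2) ℤ) :=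
  {σ | σ ∈ GammaTilde ∧ 0 ≤ σ 0 0 ∧ 0 ≤ -σ 0 1 ∧ 0 ≤ σ 1 0 ∧ 0 ≤ -σ 1 1 ∧
    -σ 1 1 ≤ -σ 0 1 ∧ 1 ≤ σ 1 0 ∧ σ 1 0 ≤ σ 0 0 ∧
    (Gphi + 1) * ((-σ 0 1 : ℤ) : ℝ) < (σ 0 0 : ℝ)}

/-- The set `P̃` of finite products `M(a₁,e₀)M(a₂,e₁)⋯M(aₙ,eₙ₋₁)` with
`M(a,e) = [[a,1],[e,0]]` and `e₀ = 1`. -/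
def Ptilde : Set (Matrix (Fin 2) (Fin 2) ℤ) :=
  {M | ∃ (n : ℕ) (a e : ℕ → ℤ), 0 < n ∧ e 0 = 1 ∧
    (∀ i, 1 ≤ i → i ≤ n → Odd (a i) ∧ 0 < a i ∧ (e i = 1 ∨ e i = -1) ∧ 2 ≤ a i + e i) ∧
    M = ((List.range n).map (fun i => !![a (i + 1), 1; e i, 0])).prod}


-- ==================== auxiliary machinery ====================

lemma sqrt5_sq : Real.sqrt 5 ^ 2 = 5 := Real.sq_sqrt (by norm_num)
lemma sqrt5_pos : 0 < Real.sqrt 5 := Real.sqrt_pos.2 (by norm_num)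
lemma sqrt5_gt : 2 < Real.sqrt 5 := by nlinarith [sqrt5_sq, sqrt5_pos]
lemma sqrt5_lt : Real.sqrt 5 < 3 := by nlinarith [sqrt5_sq, sqrt5_pos]
lemma g_pos : 0 < gphi := by unfold gphi; linarith [sqrt5_gt]
lemma g_lt_one : gphi < 1 := by unfold gphi; linarith [sqrt5_lt]
lemma g_sq : gphi ^ 2 = 1 - gphi := by unfold gphi; nlinarith [sqrt5_sq]
lemma G_eq : Gphi = gphi + 1 := by unfold Gphi gphi; ring
lemma gG : gphi * (gphi + 2) = gphi + 1 := by nlinarith [g_sq]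
lemma gkey : gphi ^ 2 * (gphi + 2) = 1 := by nlinarith [g_sq]

/-- multiplication on the right by `!![x,1;y,0]` -/
lemma mul_M (σ : Matrix (Fin 2) (Fin 2) ℤ) (x y : ℤ) :
    σ * !![x, 1; y, 0] =
      !![σ 0 0 * x + σ 0 1 * y, σ 0 0; σ 1 0 * x + σ 1 1 * y, σ 1 0] := by
  ext i j
  fin_cases i <;> fin_cases j <;>
    simp [Matrix.mul_apply, Fin.sum_univ_two]

def m2 (σ : Matrix (Fin 2) (Fin 2) ℤ) : Matrix (Fin 2) (Fin 2) (ZMod 2) :=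
  σ.map (Int.cast)

lemma m2_mul (σ τ : Matrix (Fin 2) (Fin 2) ℤ) : m2 (σ * τ) = m2 σ * m2 τ :=
  Matrix.map_mul (f := Int.castRingHom (ZMod 2))

lemma mod2eq_iff (σ τ : Matrix (Fin 2) (Fin 2) ℤ) : Mod2Eq σ τ ↔ m2 σ = m2 τ := by
  constructor
  · intro h
    ext i j
    have := h i j
    simpa [m2, Matrix.map_apply, ZMod.intCast_eq_intCast_iff, Int.ModEq] using this
  · intro h i j
    have : (σ i j : ZMod 2) = (τ i j : ZMod 2) := by
      have := congrFun (congrFun h i) j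
      simpa [m2, Matrix.map_apply] using this
    simpa [ZMod.intCast_eq_intCast_iff, Int.ModEq] using this

def Bbar : Matrix (Fin 2) (Fin 2) (ZMod 2) := !![1, 1; 1, 0]
def Abar : Matrix (Fin 2) (Fin 2) (ZMod 2) := !![0, 1; 1, 1]

def PC (σ : Matrix (Fin 2) (Fin 2) (ZMod 2)) : Prop := σ = 1 ∨ σ = Abar ∨ σ = Bbar

lemma Abar_mul_Bbar : Abar * Bbar = 1 := by
  ext i j
  fin_cases i <;> fin_cases j <;>
    simp [Abar, Bbar, Matrix.mul_apply, Fin.sum_univ_two, Matrix.one_apply] <;> decide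
lemma Bbar_mul_Bbar : Bbar * Bbar = Abar := by
  ext i j
  fin_cases i <;> fin_cases j <;>
    simp [Abar, Bbar, Matrix.mul_apply, Fin.sum_univ_two] <;> decide

lemma PC_mul_Bbar {σ : Matrix (Fin 2) (Fin 2) (ZMod 2)} (h : PC σ) : PC (σ * Bbar) := by
  rcases h with h | h | h <;> subst h
  · exact Or.inr (Or.inr (one_mul _))
  · exact Or.inl Abar_mul_Bbar
  · exact Or.inr (Or.inl Bbar_mul_Bbar)

lemma m2_factor {a e : ℤ} (ha : Odd a) (he : e = 1 ∨ e = -1) :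
    m2 !![a, 1; e, 0] = Bbar := by
  obtain ⟨k, hk⟩ := ha
  have h1 : ((a : ZMod 2)) = 1 := by
    rw [hk]; push_cast; ring_nf; simp [CharTwo.two_eq_zero]
  have h2 : ((e : ZMod 2)) = 1 := by
    rcases he with he | he <;> subst he <;> decide
  ext i j
  fin_cases i <;> fin_cases j <;> simp [m2, Matrix.map_apply, Bbar, h1, h2]

lemma m2_one : m2 1 = 1 := by
  ext i j
  fin_cases i <;> fin_cases j <;> simp [m2, Matrix.map_apply, Matrix.one_apply]

lemma m2_A : m2 !![0, 1; 1, 1] = Abar := by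
  ext i j
  fin_cases i <;> fin_cases j <;> simp [m2, Matrix.map_apply, Abar]

lemma m2_B : m2 !![1, 1; 1, 0] = Bbar := by
  ext i j
  fin_cases i <;> fin_cases j <;> simp [m2, Matrix.map_apply, Bbar]

lemma PC_iff (σ : Matrix (Fin 2) (Fin 2) ℤ) :
    PC (m2 σ) ↔
      (Mod2Eq σ 1 ∨ Mod2Eq σ !![0, 1; 1, 1] ∨ Mod2Eq σ !![1, 1; 1, 0]) := by
  rw [mod2eq_iff, mod2eq_iff, mod2eq_iff, m2_one, m2_A, m2_B, PC]

/-- The forward invariant. -/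
def MInv (σ : Matrix (Fin 2) (Fin 2) ℤ) (al : ℤ) : Prop :=
  (σ.det = 1 ∨ σ.det = -1) ∧ PC (m2 σ) ∧
  1 ≤ σ 1 0 ∧ σ 1 0 ≤ σ 0 0 ∧ 0 ≤ σ 1 1 ∧ σ 1 1 ≤ σ 0 1 ∧
  gphi * (σ 0 1 : ℝ) < (σ 0 0 : ℝ) ∧
  (3 ≤ al →
    (gphi + 2) * (σ 0 1 : ℝ) < (σ 0 0 : ℝ) ∧ σ 1 1 < σ 1 0 ∧
      σ 0 1 - σ 1 1 ≤ σ 0 0 - σ 1 0)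

lemma MInv.mem_Splus {σ : Matrix (Fin 2) (Fin 2) ℤ} {al : ℤ} (h : MInv σ al) :
    σ ∈ Splus := by
  obtain ⟨hdet, hpc, h1, h2, h3, h4, h5, -⟩ := h
  exact ⟨⟨hdet, (PC_iff σ).1 hpc⟩, by linarith, by linarith, by linarith, h3, h4,
    h1, h2, h5⟩

lemma MInv_step {σ : Matrix (Fin 2) (Fin 2) ℤ} {al a e : ℤ} (hInv : MInv σ al)
    (ha : Odd a) (hapos : 0 < a) (he : e = 1 ∨ e = -1) (hae : 2 ≤ al + e) :
    MInv (σ * !![a, 1; e, 0]) a := by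
  obtain ⟨hdet, hpc, h1, h2, h3, h4, h5, hstr⟩ := hInv
  have hpc' : PC (m2 (σ * !![a, 1; e, 0])) := by
    rw [m2_mul, m2_factor ha he]; exact PC_mul_Bbar hpc
  have hdet' : (σ * !![a, 1; e, 0]).det = -e * σ.det := by
    rw [Matrix.det_mul, Matrix.det_fin_two_of]; ring
  rw [mul_M]
  refine ⟨?_, ?_, ?_, ?_, ?_, ?_, ?_, ?_⟩
  · rw [Matrix.det_fin_two_of]
    rw [Matrix.det_fin_two] at hdet
    rcases he with rfl | rfl <;> rcases hdet with h | h
    · right; linear_combination -h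
    · left; linear_combination -h
    · left; linear_combination h
    · right; linear_combination h
  · simpa [mul_M] using hpc'
  all_goals simp only [Matrix.cons_val', Matrix.cons_val_zero, Matrix.cons_val_one,
      Matrix.head_cons, Matrix.head_fin_const, Matrix.cons_val_fin_one, Matrix.of_apply,
      Matrix.cons_val_succ]
  -- remaining: integer and real inequalities
  · -- 1 ≤ σ10*a + σ11*e
    rcases he with rfl | rfl
    · nlinarith
    · have := hstr (by linarith)
      nlinarith [this.2.1]
  · -- σ10*a + σ11*e ≤ σ00*a + σ01*e
    rcases he with rfl | rfl
    · nlinarith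
    · have := hstr (by linarith)
      nlinarith [this.2.2]
  · linarith
  · linarith
  · -- gphi * σ00 < σ00*a + σ01*e  (real)
    have hA1 : (1 : ℝ) ≤ (σ 0 0 : ℝ) := by exact_mod_cast by linarith
    have hB0 : (0 : ℝ) ≤ (σ 0 1 : ℝ) := by exact_mod_cast by linarith
    have ha1 : (1 : ℝ) ≤ (a : ℝ) := by exact_mod_cast hapos
    rcases he with rfl | rfl
    · push_cast
      nlinarith [g_lt_one, g_pos]
    · have hstr' := (hstr (by linarith)).1
      have hB : (σ 0 1 : ℝ) < (1 - gphi) * (σ 0 0 : ℝ) := by nlinarith [g_sq, gkey, g_pos]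
      push_cast
      nlinarith [g_pos, g_lt_one]
  · -- strong part for a
    intro ha3
    have hA1 : (1 : ℝ) ≤ (σ 0 0 : ℝ) := by exact_mod_cast by linarith
    have hB0 : (0 : ℝ) ≤ (σ 0 1 : ℝ) := by exact_mod_cast by linarith
    have ha3' : (3 : ℝ) ≤ (a : ℝ) := by exact_mod_cast ha3
    rcases he with rfl | rfl
    · refine ⟨?_, by nlinarith, by nlinarith⟩
      push_cast
      nlinarith [g_lt_one, g_pos]
    · have hs := hstr (by linarith)
      have hB : (σ 0 1 : ℝ) < (1 - gphi) * (σ 0 0 : ℝ) := by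
        nlinarith [g_sq, gkey, g_pos, hs.1]
      refine ⟨?_, by nlinarith [hs.2.1], by nlinarith [hs.2.2]⟩
      push_cast
      nlinarith [g_pos, g_lt_one]

lemma MInv_base {x : ℤ} (hx : Odd x) (hx1 : 0 < x) : MInv !![x, 1; 1, 0] x := by
  have hx1' : (1 : ℝ) ≤ (x : ℝ) := by exact_mod_cast hx1
  refine ⟨Or.inr (by rw [Matrix.det_fin_two_of]; ring), ?_, ?_, ?_, ?_, ?_, ?_, ?_⟩
  · rw [m2_factor hx (Or.inl rfl)]; exact Or.inr (Or.inr rfl)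
  all_goals simp only [Matrix.cons_val', Matrix.cons_val_zero, Matrix.cons_val_one,
      Matrix.head_cons, Matrix.head_fin_const, Matrix.cons_val_fin_one, Matrix.of_apply,
      Matrix.cons_val_succ]
  · exact le_refl 1
  · exact hx1
  · norm_num
  · norm_num
  · push_cast; nlinarith [g_lt_one]
  · intro h3
    have h3' : (3 : ℝ) ≤ (x : ℝ) := by exact_mod_cast h3
    refine ⟨?_, by norm_num, by omega⟩
    push_cast
    nlinarith [g_lt_one]

lemma forward_aux (a e : ℕ → ℤ) (he0 : e 0 = 1) :
    ∀ n, 1 ≤ n →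
      (∀ i, 1 ≤ i → i ≤ n → Odd (a i) ∧ 0 < a i ∧ (e i = 1 ∨ e i = -1) ∧ 2 ≤ a i + e i) →
      MInv (((List.range n).map fun i => !![a (i + 1), 1; e i, 0]).prod) (a n) := by
  intro n
  induction n with
  | zero => omega
  | succ n ih =>
    intro _ hc
    rcases Nat.eq_or_lt_of_le (Nat.one_le_iff_ne_zero.2 (Nat.succ_ne_zero n)) with h1 | h1
    · -- n + 1 = 1
      have hn0 : n = 0 := by omega
      subst hn0
      simp only [List.range_succ, List.range_zero, List.map_append, List.prod_append, List.map_cons, List.map_nil, List.prod_cons,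
        List.prod_nil, mul_one, he0]
      obtain ⟨h1, h2, -, -⟩ := hc 1 le_rfl le_rfl
      rw [one_mul]
      exact MInv_base h1 h2
    · have hn1 : 1 ≤ n := by omega
      have hih := ih hn1 (fun i hi hin => hc i hi (by omega))
      rw [List.range_succ, List.map_append, List.prod_append]
      simp only [List.map_cons, List.map_nil, List.prod_cons, List.prod_nil, mul_one]
      obtain ⟨ha, hapos, -, -⟩ := hc (n + 1) (by omega) le_rfl
      obtain ⟨-, -, he, hae⟩ := hc n hn1 (by omega)
      exact MInv_step hih ha hapos he hae

lemma forward_incl : {M | ∃ (n : ℕ) (a e : ℕ → ℤ), 0 < n ∧ e 0 = 1 ∧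
    (∀ i, 1 ≤ i → i ≤ n → Odd (a i) ∧ 0 < a i ∧ (e i = 1 ∨ e i = -1) ∧ 2 ≤ a i + e i) ∧
    M = ((List.range n).map (fun i => !![a (i + 1), 1; e i, 0])).prod} ⊆ Splus := by
  rintro M ⟨n, a, e, hn, he0, hc, rfl⟩
  exact (forward_aux a e he0 n hn hc).mem_Splus

lemma irr5 : Irrational (Real.sqrt 5) := by
  have : (5 : ℝ) = ((5 : ℕ) : ℝ) := by norm_num
  rw [this]
  exact (by norm_num : Nat.Prime 5).irrational_sqrt

lemma choose_a (A B : ℤ) (hB : 0 < B) (hg : gphi * (B : ℝ) < (A : ℝ)) :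
    ∃ a : ℤ, Odd a ∧ 1 ≤ a ∧ ((a : ℝ) * B < A + gphi ^ 2 * B) ∧
      ((A : ℝ) < ((a : ℝ) + 1 + gphi) * B) := by
  have hBR : (0 : ℝ) < (B : ℝ) := by exact_mod_cast hB
  set x : ℝ := (((A : ℝ) / B) - 1 + gphi ^ 2) / 2 with hx
  set k : ℤ := ⌊x⌋ with hk
  have hfl : (k : ℝ) ≤ x := Int.floor_le x
  have hfu : x < (k : ℝ) + 1 := Int.lt_floor_add_one x
  have hne : (k : ℝ) ≠ x := by
    intro hkx
    apply irr5
    have hgx : gphi ^ 2 = (3 - Real.sqrt 5) / 2 := by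
      unfold gphi; linear_combination sqrt5_sq / 4
    have h5 : Real.sqrt 5 = 2 * (A : ℝ) / B + 1 - 4 * k := by
      rw [hx, hgx] at hkx
      field_simp at hkx ⊢
      linarith
    refine ⟨((2 * A + B - 4 * k * B : ℤ) : ℚ) / ((B : ℤ) : ℚ), ?_⟩
    rw [h5]
    push_cast
    field_simp
  have hklt : (k : ℝ) < x := lt_of_le_of_ne hfl hne
  refine ⟨2 * k + 1, ⟨k, by ring⟩, ?_, ?_, ?_⟩
  · -- 1 ≤ 2k+1, i.e. 0 ≤ k
    have : (-1 : ℝ) < 2 * (k : ℝ) + 1 := by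
      have h1 : ((A : ℝ) / B) > gphi := by
        rw [gt_iff_lt, lt_div_iff₀ hBR]; linarith
      nlinarith [g_sq, g_pos]
    have : (-1 : ℤ) < 2 * k + 1 := by exact_mod_cast this
    omega
  · -- (2k+1) B < A + g² B
    have h1 : (2 * (k : ℝ) + 1) < (A : ℝ) / B + gphi ^ 2 := by
      rw [hx] at hklt; linarith
    calc ((2 * k + 1 : ℤ) : ℝ) * B = (2 * (k : ℝ) + 1) * B := by push_cast; ring
    _ < ((A : ℝ) / B + gphi ^ 2) * B := by
        exact mul_lt_mul_of_pos_right h1 hBR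
    _ = A + gphi ^ 2 * B := by field_simp
  · -- A < (2k+1 + 1 + g) B
    have h1 : (A : ℝ) / B < 2 * (k : ℝ) + 2 + 1 - gphi ^ 2 := by
      rw [hx] at hfu; linarith
    have h2 : (A : ℝ) / B < 2 * (k : ℝ) + 2 + gphi := by
      nlinarith [g_sq]
    calc (A : ℝ) = ((A : ℝ) / B) * B := by field_simp
    _ < (2 * (k : ℝ) + 2 + gphi) * B := mul_lt_mul_of_pos_right h2 hBR
    _ = (((2 * k + 1 : ℤ) : ℝ) + 1 + gphi) * B := by push_cast; ring

lemma int_mul_one {x y : ℤ} (hx : 1 ≤ x) (h : x * y = 1) : x = 1 := by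
  rcases Int.isUnit_iff.mp (IsUnit.of_mul_eq_one y h) with h1 | h1 <;> omega

lemma Bcube : Bbar * Bbar * Bbar = 1 := by
  rw [Bbar_mul_Bbar, Abar_mul_Bbar]

/-- Strengthened decomposition predicate. -/
def PS (σ : Matrix (Fin 2) (Fin 2) ℤ) : Prop :=
  ∃ (n : ℕ) (a e : ℕ → ℤ), 0 < n ∧ e 0 = 1 ∧
    (∀ i, 1 ≤ i → i ≤ n → Odd (a i) ∧ 0 < a i ∧ (e i = 1 ∨ e i = -1) ∧ 2 ≤ a i + e i) ∧
    σ = ((List.range n).map (fun i => !![a (i + 1), 1; e i, 0])).prod ∧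
    ((gphi + 2) * (σ 0 1 : ℝ) < (σ 0 0 : ℝ) → 3 ≤ a n)

lemma PS_extend {σ' : Matrix (Fin 2) (Fin 2) ℤ} (h : PS σ') {a ev : ℤ}
    (haodd : Odd a) (ha1 : 0 < a) (hev : ev = 1 ∨ ev = -1)
    (hstr : ev = -1 → (gphi + 2) * (σ' 0 1 : ℝ) < (σ' 0 0 : ℝ))
    (h3 : (gphi + 2) * (((σ' * !![a, 1; ev, 0]) 0 1 : ℤ) : ℝ) <
        (((σ' * !![a, 1; ev, 0]) 0 0 : ℤ) : ℝ) → 3 ≤ a) :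
    PS (σ' * !![a, 1; ev, 0]) := by
  obtain ⟨n, a', e', hn, he0, hc, hprod, hlast⟩ := h
  refine ⟨n + 1, Function.update a' (n + 1) a,
    Function.update (Function.update e' n ev) (n + 1) 1,
    by omega, ?_, ?_, ?_, ?_⟩
  · rw [Function.update_of_ne (show 0 ≠ n + 1 by omega),
      Function.update_of_ne (show 0 ≠ n by omega), he0]
  · intro i h1 h2
    by_cases hi : i = n + 1
    · subst hi
      rw [Function.update_self, Function.update_self]
      exact ⟨haodd, ha1, Or.inl rfl, by omega⟩
    · by_cases hi2 : i = n
      · obtain ⟨o1, o2, -, -⟩ := hc i h1 (by omega)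
        rw [Function.update_of_ne hi, Function.update_of_ne hi,
          show i = n from hi2, Function.update_self]
        have hai : a' i = a' n := by rw [hi2]
        refine ⟨by rwa [hai] at o1, by rwa [hai] at o2, hev, ?_⟩
        rcases hev with rfl | rfl
        · omega
        · have h3n := hlast (hstr rfl)
          omega
      · obtain ⟨o1, o2, o3, o4⟩ := hc i h1 (by omega)
        rw [Function.update_of_ne hi, Function.update_of_ne hi,
          Function.update_of_ne hi2]
        exact ⟨o1, o2, o3, o4⟩
  · rw [List.range_succ, List.map_append, List.prod_append]
    simp only [List.map_cons, List.map_nil, List.prod_cons, List.prod_nil, mul_one]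
    have hmap : (List.range n).map
        (fun i => !![Function.update a' (n + 1) a (i + 1), 1;
          Function.update (Function.update e' n ev) (n + 1) 1 i, 0]) =
        (List.range n).map (fun i => !![a' (i + 1), 1; e' i, 0]) := by
      apply List.map_congr_left
      intro i hi
      have hi' : i < n := List.mem_range.mp hi
      rw [Function.update_of_ne (show i + 1 ≠ n + 1 by omega),
        Function.update_of_ne (show i ≠ n + 1 by omega),
        Function.update_of_ne (show i ≠ n by omega)]
    rw [hmap, ← hprod, Function.update_self,
      Function.update_of_ne (show n ≠ n + 1 by omega), Function.update_self]
  · rw [Function.update_self]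
    exact h3

lemma backward_main : ∀ N : ℕ, ∀ σ : Matrix (Fin 2) (Fin 2) ℤ, σ ∈ Splus →
    (σ 0 0 + σ 0 1).toNat ≤ N → PS σ := by
  intro N
  induction N with
  | zero =>
    intro σ hσ hm
    exfalso
    obtain ⟨-, hA0, hB0, -, -, -, hC1, hCA, -⟩ := hσ
    omega
  | succ N ih =>
    intro σ hσ hm
    obtain ⟨⟨hdet, hpar⟩, hA0, hB0, hC0, hD0, hDB, hC1, hCA, hgBA⟩ := hσ
    have hdet2 : σ 0 0 * σ 1 1 - σ 0 1 * σ 1 0 = 1 ∨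
        σ 0 0 * σ 1 1 - σ 0 1 * σ 1 0 = -1 := by
      rwa [Matrix.det_fin_two] at hdet
    have hB1 : 1 ≤ σ 0 1 := by
      by_contra h
      have hB : σ 0 1 = 0 := by omega
      have hD : σ 1 1 = 0 := by omega
      rcases hdet2 with h' | h' <;> rw [hB, hD] at h' <;> simp at h'
    by_cases hD : σ 1 1 = 0
    · -- base case : σ = M(σ₀₀, 1)
      have hprod1 : σ 0 1 * σ 1 0 = 1 := by
        rcases hdet2 with h' | h' <;> rw [hD] at h'
        · exfalso
          nlinarith [mul_pos (show (0:ℤ) < σ 0 1 by omega) (show (0:ℤ) < σ 1 0 by omega)]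
        · linarith
      have hBeq : σ 0 1 = 1 := by
        have h2 : σ 0 1 ≤ 1 := by nlinarith
        omega
      have hCeq : σ 1 0 = 1 := by
        have h2 : σ 1 0 ≤ 1 := by nlinarith
        omega
      have hodd : σ 0 0 % 2 = 1 := by
        rcases hpar with h | h | h
        · have h01 := h 0 1
          rw [hBeq] at h01
          simp [Matrix.one_apply] at h01
        · have h11 := h 1 1
          rw [hD] at h11
          simp at h11
        · have h00 := h 0 0
          simpa using h00
      refine ⟨1, fun _ => σ 0 0, fun _ => 1, one_pos, rfl, ?_, ?_, ?_⟩
      · intro i h1 h2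
        exact ⟨Int.odd_iff.mpr hodd, by show (0:ℤ) < σ 0 0; omega, Or.inl rfl,
          by show (2:ℤ) ≤ σ 0 0 + 1; omega⟩
      · rw [show (List.range 1) = [0] from rfl]
        simp only [List.map_cons, List.map_nil, List.prod_cons, List.prod_nil, mul_one]
        conv_lhs => rw [Matrix.eta_fin_two σ]
        rw [hBeq, hCeq, hD]
      · intro hreal
        rw [hBeq] at hreal
        have h2 : (2 : ℝ) < (σ 0 0 : ℝ) := by push_cast at hreal ⊢; nlinarith [g_pos]
        have h3 : (2 : ℤ) < σ 0 0 := by exact_mod_cast h2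
        show (3:ℤ) ≤ σ 0 0
        omega
    · -- recursive case
      have hD1 : 1 ≤ σ 1 1 := by omega
      have hBR : (0:ℝ) < ((σ 0 1 : ℤ) : ℝ) := by exact_mod_cast hB1
      obtain ⟨a, haodd, ha1, hlow, hhigh⟩ := choose_a (σ 0 0) (σ 0 1) (by omega) hgBA
      have hg2lt1 : gphi ^ 2 < 1 := by nlinarith [g_sq, g_pos]
      have haB1 : 1 ≤ a * σ 0 1 := by
        have h := mul_le_mul ha1 hB1 zero_le_one (by omega : (0:ℤ) ≤ a)
        linarith
      have hANe : σ 0 0 ≠ a * σ 0 1 := by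
        intro hEq
        have hBone : σ 0 1 = 1 := by
          rcases hdet2 with h' | h'
          · exact int_mul_one (y := a * σ 1 1 - σ 1 0) hB1
              (by linear_combination h' - σ 1 1 * hEq)
          · exact int_mul_one (y := σ 1 0 - a * σ 1 1) hB1
              (by linear_combination -h' + σ 1 1 * hEq)
        have hDone : σ 1 1 = 1 := by omega
        have haodd' : a % 2 = 1 := Int.odd_iff.mp haodd
        rcases hpar with h | h | h
        · have h01 := h 0 1
          rw [hBone] at h01
          simp [Matrix.one_apply] at h01
        · have h00 := h 0 0
          rw [hEq, hBone, mul_one] at h00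
          simp at h00
          omega
        · have h11 := h 1 1
          rw [hDone] at h11
          simp at h11
      rcases lt_or_gt_of_ne hANe with hltA | hgtA
      · -- branch e = -1 : σ₀₀ < a σ₀₁
        set σ' : Matrix (Fin 2) (Fin 2) ℤ :=
          !![σ 0 1, a * σ 0 1 - σ 0 0; σ 1 1, a * σ 1 1 - σ 1 0] with hσ'
        have e00 : σ' 0 0 = σ 0 1 := by simp [hσ']
        have e01 : σ' 0 1 = a * σ 0 1 - σ 0 0 := by simp [hσ']
        have e10 : σ' 1 0 = σ 1 1 := by simp [hσ']
        have e11 : σ' 1 1 = a * σ 1 1 - σ 1 0 := by simp [hσ']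
        have hident : σ' * !![a, 1; -1, 0] = σ := by
          rw [mul_M, e00, e01, e10, e11]
          conv_rhs => rw [Matrix.eta_fin_two σ]
          congr 1 <;> ring
        have hB'1 : 1 ≤ a * σ 0 1 - σ 0 0 := by omega
        have hid : σ 0 1 * (a * σ 1 1 - σ 1 0) =
            σ 1 1 * (a * σ 0 1 - σ 0 0) + (σ 0 0 * σ 1 1 - σ 0 1 * σ 1 0) := by ring
        have hD'0 : 0 ≤ a * σ 1 1 - σ 1 0 := by
          by_contra hcon
          push_neg at hcon
          have hP : σ 0 1 * (a * σ 1 1 - σ 1 0) ≤ σ 0 1 * (-1) :=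
            mul_le_mul_of_nonneg_left (by omega) (by omega)
          have hQ : (0:ℤ) < σ 1 1 * (a * σ 0 1 - σ 0 0) := mul_pos (by omega) (by omega)
          rcases hdet2 with h' | h' <;> nlinarith
        have hD'B' : a * σ 1 1 - σ 1 0 ≤ a * σ 0 1 - σ 0 0 := by
          have hid2 : σ 0 1 * ((a * σ 0 1 - σ 0 0) - (a * σ 1 1 - σ 1 0)) =
              (a * σ 0 1 - σ 0 0) * (σ 0 1 - σ 1 1) -
                (σ 0 0 * σ 1 1 - σ 0 1 * σ 1 0) := by ring
          by_contra hcon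
          push_neg at hcon
          have hP : σ 0 1 * ((a * σ 0 1 - σ 0 0) - (a * σ 1 1 - σ 1 0)) ≤ σ 0 1 * (-1) :=
            mul_le_mul_of_nonneg_left (by omega) (by omega)
          have hQ : 0 ≤ (a * σ 0 1 - σ 0 0) * (σ 0 1 - σ 1 1) :=
            mul_nonneg (by omega) (by omega)
          rcases hdet2 with h' | h'
          · -- Δ = 1 : forces σ 0 1 = σ 1 1, then contradiction via size of a
            have hQ' : (a * σ 0 1 - σ 0 0) * (σ 0 1 - σ 1 1) ≤ 0 := by nlinarith
            have hQ0 : (a * σ 0 1 - σ 0 0) * (σ 0 1 - σ 1 1) = 0 := le_antisymm hQ' hQ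
            have hBD : σ 0 1 = σ 1 1 := by
              rcases mul_eq_zero.mp hQ0 with h0 | h0 <;> omega
            have hprod : σ 0 1 * (σ 0 0 - σ 1 0) = 1 := by
              linear_combination h' + σ 0 0 * hBD
            have hB1' : σ 0 1 = 1 := int_mul_one hB1 hprod
            have haA : a ≤ σ 0 0 := by
              have hr : (a : ℝ) < (σ 0 0 : ℝ) + 1 := by
                rw [hB1'] at hlow
                push_cast at hlow ⊢
                nlinarith
              have : a < σ 0 0 + 1 := by exact_mod_cast hr
              omega
            have hmul1 : a * σ 0 1 = a := by rw [hB1', mul_one]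
            omega
          · nlinarith
        -- σ' is in Splus
        have hσ'det : σ'.det = 1 ∨ σ'.det = -1 := by
          rw [Matrix.det_fin_two, e00, e01, e10, e11]
          rcases hdet2 with h' | h'
          · left; linear_combination h'
          · right; linear_combination h'
        have hσ'par : PC (m2 σ') := by
          have h1 : m2 σ' * Bbar = m2 σ := by
            rw [← m2_factor haodd (Or.inr rfl), ← m2_mul, hident]
          have hBc : Bbar * (Bbar * Bbar) = 1 := by rw [← mul_assoc, Bcube]
          have h2 : m2 σ' = m2 σ * Bbar * Bbar := by
            calc m2 σ' = m2 σ' * (Bbar * (Bbar * Bbar)) := by rw [hBc, mul_one]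
            _ = (m2 σ' * Bbar) * (Bbar * Bbar) := by rw [mul_assoc]
            _ = m2 σ * (Bbar * Bbar) := by rw [h1]
            _ = m2 σ * Bbar * Bbar := by rw [mul_assoc]
          rw [h2]
          exact PC_mul_Bbar (PC_mul_Bbar ((PC_iff σ).2 hpar))
        have hstrong : (gphi + 2) * ((a * σ 0 1 - σ 0 0 : ℤ) : ℝ) < ((σ 0 1 : ℤ) : ℝ) := by
          push_cast at hlow ⊢
          nlinarith [gkey, g_pos]
        have hgσ' : gphi * ((a * σ 0 1 - σ 0 0 : ℤ) : ℝ) < ((σ 0 1 : ℤ) : ℝ) := by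
          have hB'R : (0:ℝ) ≤ ((a * σ 0 1 - σ 0 0 : ℤ) : ℝ) := by exact_mod_cast (by omega : (0:ℤ) ≤ a * σ 0 1 - σ 0 0)
          nlinarith [g_pos]
        have hσ'mem : σ' ∈ Splus := by
          refine ⟨⟨hσ'det, (PC_iff σ').1 hσ'par⟩, ?_, ?_, ?_, ?_, ?_, ?_, ?_, ?_⟩ <;>
            simp only [e00, e01, e10, e11]
          · linarith
          · linarith [hB'1]
          · linarith
          · exact hD'0
          · exact hD'B'
          · exact hD1
          · exact hDB
          · exact hgσ'
        have hmeas : ((σ' 0 0 + σ' 0 1).toNat ≤ N) := by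
          rw [e00, e01]
          have hr : ((a * σ 0 1 : ℤ) : ℝ) < ((2 * σ 0 0 : ℤ) : ℝ) := by
            push_cast at hlow ⊢
            nlinarith [g_pos, g_sq, mul_pos (show (0:ℝ) < 2 * gphi - 1 by
              unfold gphi; nlinarith [sqrt5_gt]) hBR]
          have hi2 : a * σ 0 1 < 2 * σ 0 0 := by exact_mod_cast hr
          generalize hgen : a * σ 0 1 = t at hi2 hB'1 ⊢
          omega
        have hPS' := ih σ' hσ'mem hmeas
        have h3 : (gphi + 2) * (((σ' * !![a, 1; -1, 0]) 0 1 : ℤ) : ℝ) <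
            (((σ' * !![a, 1; -1, 0]) 0 0 : ℤ) : ℝ) → 3 ≤ a := by
          rw [hident]
          intro hpre
          have h1r : (1:ℝ) < (a:ℝ) := by
            by_contra hcon
            push_neg at hcon
            have hmm : ((a:ℝ) + 1 + gphi) * σ 0 1 ≤ (gphi + 2) * σ 0 1 :=
              mul_le_mul_of_nonneg_right (by linarith) (le_of_lt hBR)
            linarith [hhigh, hpre]
          have h1i : (1:ℤ) < a := by exact_mod_cast h1r
          obtain ⟨k, hk⟩ := haodd
          omega
        have hfin := PS_extend hPS' haodd (by omega) (Or.inr rfl)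
          (fun _ => by rw [e00, e01]; exact hstrong) h3
        rwa [hident] at hfin
      · -- branch e = +1 : a σ₀₁ < σ₀₀
        set σ' : Matrix (Fin 2) (Fin 2) ℤ :=
          !![σ 0 1, σ 0 0 - a * σ 0 1; σ 1 1, σ 1 0 - a * σ 1 1] with hσ'
        have e00 : σ' 0 0 = σ 0 1 := by simp [hσ']
        have e01 : σ' 0 1 = σ 0 0 - a * σ 0 1 := by simp [hσ']
        have e10 : σ' 1 0 = σ 1 1 := by simp [hσ']
        have e11 : σ' 1 1 = σ 1 0 - a * σ 1 1 := by simp [hσ']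
        have hident : σ' * !![a, 1; 1, 0] = σ := by
          rw [mul_M, e00, e01, e10, e11]
          conv_rhs => rw [Matrix.eta_fin_two σ]
          congr 1 <;> ring
        have hB'1 : 1 ≤ σ 0 0 - a * σ 0 1 := by omega
        have hid : σ 0 1 * (σ 1 0 - a * σ 1 1) =
            σ 1 1 * (σ 0 0 - a * σ 0 1) - (σ 0 0 * σ 1 1 - σ 0 1 * σ 1 0) := by ring
        have hD'0 : 0 ≤ σ 1 0 - a * σ 1 1 := by
          by_contra hcon
          push_neg at hcon
          have hP : σ 0 1 * (σ 1 0 - a * σ 1 1) ≤ σ 0 1 * (-1) :=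
            mul_le_mul_of_nonneg_left (by omega) (by omega)
          have hQ : (0:ℤ) < σ 1 1 * (σ 0 0 - a * σ 0 1) := mul_pos (by omega) (by omega)
          rcases hdet2 with h' | h' <;> nlinarith
        have hD'B' : σ 1 0 - a * σ 1 1 ≤ σ 0 0 - a * σ 0 1 := by
          have hid2 : σ 0 1 * ((σ 0 0 - a * σ 0 1) - (σ 1 0 - a * σ 1 1)) =
              (σ 0 0 - a * σ 0 1) * (σ 0 1 - σ 1 1) +
                (σ 0 0 * σ 1 1 - σ 0 1 * σ 1 0) := by ring
          by_contra hcon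
          push_neg at hcon
          have hP : σ 0 1 * ((σ 0 0 - a * σ 0 1) - (σ 1 0 - a * σ 1 1)) ≤ σ 0 1 * (-1) :=
            mul_le_mul_of_nonneg_left (by omega) (by omega)
          have hQ : 0 ≤ (σ 0 0 - a * σ 0 1) * (σ 0 1 - σ 1 1) :=
            mul_nonneg (by omega) (by omega)
          rcases hdet2 with h' | h'
          · nlinarith
          · have hQ' : (σ 0 0 - a * σ 0 1) * (σ 0 1 - σ 1 1) ≤ 0 := by nlinarith
            have hQ0 : (σ 0 0 - a * σ 0 1) * (σ 0 1 - σ 1 1) = 0 := le_antisymm hQ' hQ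
            have hBD : σ 0 1 = σ 1 1 := by
              rcases mul_eq_zero.mp hQ0 with h0 | h0 <;> omega
            nlinarith [mul_nonneg (show (0:ℤ) ≤ σ 0 1 by omega)
              (show (0:ℤ) ≤ σ 0 0 - σ 1 0 by omega)]
        have hσ'det : σ'.det = 1 ∨ σ'.det = -1 := by
          rw [Matrix.det_fin_two, e00, e01, e10, e11]
          rcases hdet2 with h' | h'
          · right; linear_combination -h'
          · left; linear_combination -h'
        have hσ'par : PC (m2 σ') := by
          have h1 : m2 σ' * Bbar = m2 σ := by
            rw [← m2_factor haodd (Or.inl rfl), ← m2_mul, hident]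
          have hBc : Bbar * (Bbar * Bbar) = 1 := by rw [← mul_assoc, Bcube]
          have h2 : m2 σ' = m2 σ * Bbar * Bbar := by
            calc m2 σ' = m2 σ' * (Bbar * (Bbar * Bbar)) := by rw [hBc, mul_one]
            _ = (m2 σ' * Bbar) * (Bbar * Bbar) := by rw [mul_assoc]
            _ = m2 σ * (Bbar * Bbar) := by rw [h1]
            _ = m2 σ * Bbar * Bbar := by rw [mul_assoc]
          rw [h2]
          exact PC_mul_Bbar (PC_mul_Bbar ((PC_iff σ).2 hpar))
        have hgσ' : gphi * ((σ 0 0 - a * σ 0 1 : ℤ) : ℝ) < ((σ 0 1 : ℤ) : ℝ) := by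
          have hlt : (σ 0 0 : ℝ) - (a : ℝ) * σ 0 1 < (1 + gphi) * σ 0 1 := by
            push_cast at hhigh ⊢
            linarith
          have h2 := mul_lt_mul_of_pos_left hlt g_pos
          push_cast
          nlinarith [g_sq]
        have hσ'mem : σ' ∈ Splus := by
          refine ⟨⟨hσ'det, (PC_iff σ').1 hσ'par⟩, ?_, ?_, ?_, ?_, ?_, ?_, ?_, ?_⟩ <;>
            simp only [e00, e01, e10, e11]
          · linarith
          · linarith [hB'1]
          · linarith
          · exact hD'0
          · exact hD'B'
          · exact hD1
          · exact hDB
          · exact hgσ'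
        have hmeas : ((σ' 0 0 + σ' 0 1).toNat ≤ N) := by
          rw [e00, e01]
          generalize hgen : a * σ 0 1 = t at haB1 ⊢
          omega
        have hPS' := ih σ' hσ'mem hmeas
        have h3 : (gphi + 2) * (((σ' * !![a, 1; 1, 0]) 0 1 : ℤ) : ℝ) <
            (((σ' * !![a, 1; 1, 0]) 0 0 : ℤ) : ℝ) → 3 ≤ a := by
          rw [hident]
          intro hpre
          have h1r : (1:ℝ) < (a:ℝ) := by
            by_contra hcon
            push_neg at hcon
            have hmm : ((a:ℝ) + 1 + gphi) * σ 0 1 ≤ (gphi + 2) * σ 0 1 :=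
              mul_le_mul_of_nonneg_right (by linarith) (le_of_lt hBR)
            linarith [hhigh, hpre]
          have h1i : (1:ℤ) < a := by exact_mod_cast h1r
          obtain ⟨k, hk⟩ := haodd
          omega
        have hfin := PS_extend hPS' haodd (by omega) (Or.inl rfl)
          (fun hcon => absurd hcon (by norm_num)) h3
        rwa [hident] at hfin


lemma forward_incl2 : Ptilde ⊆ Splus := by
  rintro M ⟨n, a, e, hn, he0, hc, rfl⟩
  exact (forward_aux a e he0 n hn hc).mem_Splus


theorem Ptilde_eq_S : Ptilde = Splus := by
  apply Set.eq_of_subset_of_subset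
  · exact forward_incl2
  · intro σ hσ
    obtain ⟨n, a, e, hn, he0, hc, hprod, -⟩ :=
      backward_main (σ 0 0 + σ 0 1).toNat σ hσ le_rfl
    exact ⟨n, a, e, hn, he0, hc, hprod⟩
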